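/- (Harris/FKG inequality for product measure) Let E be a finite set and P a product probability measure on Ω = {0,1}^E. For any two increasing events A, B ⊆ Ω, P(A ∩ B) ≥ P(A) P(B). -/
import Mathlib


open MeasureTheory

private lemma measure_finset_eq_sum {α : Type*} [MeasurableSpace α]
    [MeasurableSingletonClass α] (ν : Measure α) (s : Finset α) :
    ν (↑s : Set α) = ∑ x ∈ s, ν {x} := by
  have h : (↑s : Set α) = ⋃ x ∈ s, ({x} : Set α) := by ext y; simp
  rw [h]
  exact measure_biUnion_finset (by simp [Set.PairwiseDisjoint, Set.Pairwise])
    fun x _ => measurableSet_singleton x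

/-- **The Harris/FKG inequality for product measures.** Let `E` be a finite set
and `P` a product probability measure on `Ω = {0,1}^E` (modelled as
`E → Bool`). For any two increasing events `A, B`, one has
`P(A ∩ B) ≥ P(A) P(B)`. -/
theorem harris_fkg_inequality
    {E : Type*} [Fintype E]
    (μ : E → Measure Bool) [∀ e, IsProbabilityMeasure (μ e)]
    (P : Measure (E → Bool)) (hP : P = Measure.pi μ)
    (A B : Set (E → Bool))
    (hA : ∀ ⦃ω ω' : E → Bool⦄, ω ≤ ω' → ω ∈ A → ω' ∈ A)
    (hB : ∀ ⦃ω ω' : E → Bool⦄, ω ≤ ω' → ω ∈ B → ω' ∈ B) :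
    P A * P B ≤ P (A ∩ B) := by
  classical
  subst hP
  set P := Measure.pi μ with hP
  have hprob : IsProbabilityMeasure P := by infer_instance
  -- point masses
  set m : (E → Bool) → ℝ := fun ω => (P {ω}).toReal with hm
  have hm0 : 0 ≤ m := fun ω => ENNReal.toReal_nonneg
  have hsingle : ∀ ω : E → Bool, P {ω} = ∏ e, μ e {ω e} := by
    intro ω
    rw [← Set.univ_pi_singleton ω, Measure.pi_pi]
  -- lattice condition (in fact an equality)
  have hlat : ∀ a b : E → Bool, m a * m b = m (a ⊓ b) * m (a ⊔ b) := by
    intro a b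
    have : P {a} * P {b} = P {a ⊓ b} * P {a ⊔ b} := by
      simp only [hsingle, ← Finset.prod_mul_distrib]
      refine Finset.prod_congr rfl fun e _ => ?_
      have h1 : (a ⊓ b) e = a e ⊓ b e := rfl
      have h2 : (a ⊔ b) e = a e ⊔ b e := rfl
      rw [h1, h2]
      rcases le_total (a e) (b e) with h | h
      · rw [inf_of_le_left h, sup_of_le_right h]
      · rw [inf_of_le_right h, sup_of_le_left h, mul_comm]
    simp only [hm, ← ENNReal.toReal_mul, this]
  -- measures of sets as sums
  have hsum : ∀ S : Set (E → Bool),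
      (P S).toReal = ∑ ω : E → Bool, m ω * (if ω ∈ S then (1:ℝ) else 0) := by
    intro S
    have hset : (↑(Finset.univ.filter (· ∈ S)) : Set (E → Bool)) = S := by
      ext ω; simp
    calc (P S).toReal = (P ↑(Finset.univ.filter (· ∈ S))).toReal := by rw [hset]
      _ = ∑ ω ∈ Finset.univ.filter (· ∈ S), m ω := by
          rw [measure_finset_eq_sum, ENNReal.toReal_sum (fun x _ => measure_ne_top _ _)]
      _ = ∑ ω : E → Bool, m ω * (if ω ∈ S then (1:ℝ) else 0) := by
          rw [Finset.sum_filter]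
          refine Finset.sum_congr rfl fun ω _ => ?_
          by_cases h : ω ∈ S <;>
            simp only [h, if_true, if_false, mul_one, mul_zero]
  -- indicators
  set f : (E → Bool) → ℝ := fun ω => if ω ∈ A then 1 else 0 with hf
  set g : (E → Bool) → ℝ := fun ω => if ω ∈ B then 1 else 0 with hg
  have hf0 : 0 ≤ f := fun ω => by by_cases h : ω ∈ A <;> simp [hf, h]
  have hg0 : 0 ≤ g := fun ω => by by_cases h : ω ∈ B <;> simp [hg, h]
  have hfmono : Monotone f := by
    intro a b hab
    by_cases ha : a ∈ A
    · simp [hf, ha, hA hab ha]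
    · by_cases hb : b ∈ A <;> simp [hf, ha, hb]
  have hgmono : Monotone g := by
    intro a b hab
    by_cases ha : a ∈ B
    · simp [hg, ha, hB hab ha]
    · by_cases hb : b ∈ B <;> simp [hg, ha, hb]
  have key := fkg f g m hm0 hf0 hg0 hfmono hgmono (fun a b => (hlat a b).le)
  have hmsum : ∑ ω : E → Bool, m ω = 1 := by
    have h1 := hsum Set.univ
    simp only [Set.mem_univ, if_true, mul_one, measure_univ, ENNReal.toReal_one] at h1
    exact h1.symm
  have hAB : ∀ ω : E → Bool, f ω * g ω = if ω ∈ A ∩ B then (1:ℝ) else 0 := by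
    intro ω
    by_cases ha : ω ∈ A <;> by_cases hb : ω ∈ B <;>
      simp [hf, hg, ha, hb, Set.mem_inter_iff]
  have hreal : (P A).toReal * (P B).toReal ≤ (P (A ∩ B)).toReal := by
    rw [hsum A, hsum B, hsum (A ∩ B)]
    refine key.trans ?_
    rw [hmsum, one_mul]
    refine le_of_eq (Finset.sum_congr rfl fun ω _ => ?_)
    rw [hAB ω]
    congr
  rw [← ENNReal.toReal_le_toReal (by finiteness) (measure_ne_top _ _),
    ENNReal.toReal_mul]
  exact hreal
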